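/- Let a, b > 0 and c ∈ ℝ, and define f : ℝ → ℝ by f(t) = b·sin(arctan(a b² t + c)). Then f is differentiable, |f(t)| < b for all t, and f satisfies the ordinary differential equation f′(t) = a (b − f(t))^{3/2} (b + f(t))^{3/2} for all t ∈ ℝ. -/

import Mathlib

open scoped Classical BigOperators ENNReal

noncomputable section

lemma sin_arctan_abs_lt_one (x : ℝ) : |Real.sin (Real.arctan x)| < 1 := by
  have hcos : 0 < Real.cos (Real.arctan x) := Real.cos_arctan_pos x
  have h := Real.sin_sq_add_cos_sq (Real.arctan x)
  nlinarith [abs_nonneg (Real.sin (Real.arctan x)),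
    sq_abs (Real.sin (Real.arctan x))]

/-- `f(t) = b sin(arctan(ab²t + c))` is differentiable, bounded by `b` in
absolute value, and solves `f′ = a (b − f)^{3/2} (b + f)^{3/2}`. -/
theorem stmt_9 (a b c : ℝ) (ha : 0 < a) (hb : 0 < b) (f : ℝ → ℝ)
    (hf : ∀ t, f t = b * Real.sin (Real.arctan (a * b ^ 2 * t + c))) :
    Differentiable ℝ f ∧ (∀ t, |f t| < b) ∧
      ∀ t, HasDerivAt f (a * (b - f t) ^ ((3 : ℝ) / 2) * (b + f t) ^ ((3 : ℝ) / 2)) t := by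
  have key : ∀ t, HasDerivAt f
      (a * (b - f t) ^ ((3 : ℝ) / 2) * (b + f t) ^ ((3 : ℝ) / 2)) t := by
    intro t
    set u : ℝ := a * b ^ 2 * t + c with hu
    set θ : ℝ := Real.arctan u with hθ
    have h1 : HasDerivAt (fun s : ℝ => a * b ^ 2 * s + c) (a * b ^ 2) t := by
      simpa using ((hasDerivAt_id t).const_mul (a * b ^ 2)).add_const c
    have h2 : HasDerivAt (fun s : ℝ => Real.arctan (a * b ^ 2 * s + c))
        (1 / (1 + u ^ 2) * (a * b ^ 2)) t :=
      (Real.hasDerivAt_arctan _).comp t h1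
    have h3 : HasDerivAt (fun s : ℝ => b * Real.sin (Real.arctan (a * b ^ 2 * s + c)))
        (b * (Real.cos θ * (1 / (1 + u ^ 2) * (a * b ^ 2)))) t :=
      ((Real.hasDerivAt_sin _).comp t h2).const_mul b
    have hfeq : f = fun s : ℝ => b * Real.sin (Real.arctan (a * b ^ 2 * s + c)) :=
      funext hf
    have h4 : HasDerivAt f (b * (Real.cos θ * (1 / (1 + u ^ 2) * (a * b ^ 2)))) t :=
      hfeq ▸ h3
    convert h4 using 1
    -- now prove the derivative values coincide
    have hcos : 0 < Real.cos θ := Real.cos_arctan_pos u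
    have hcos2 : Real.cos θ ^ 2 = 1 / (1 + u ^ 2) := by
      rw [hθ, Real.cos_arctan]
      rw [div_pow, one_pow, Real.sq_sqrt (by positivity)]
    have hsin : |Real.sin θ| < 1 := sin_arctan_abs_lt_one u
    have habs := abs_lt.mp hsin
    have hft : f t = b * Real.sin θ := by rw [hf t]
    have hsub : 0 ≤ b - f t := by nlinarith [habs.2]
    have hadd : 0 ≤ b + f t := by nlinarith [habs.1]
    have hprod : (b - f t) * (b + f t) = (b * Real.cos θ) ^ 2 := by
      have h := Real.sin_sq_add_cos_sq θ
      rw [hft]; ring_nf; nlinarith [h]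
    have hbc : 0 ≤ b * Real.cos θ := by positivity
    calc a * (b - f t) ^ ((3 : ℝ) / 2) * (b + f t) ^ ((3 : ℝ) / 2)
        = a * ((b - f t) * (b + f t)) ^ ((3 : ℝ) / 2) := by
          rw [Real.mul_rpow hsub hadd]; ring
      _ = a * ((b * Real.cos θ) ^ ((2 : ℝ)) ) ^ ((3 : ℝ) / 2) := by
          rw [hprod, Real.rpow_two]
      _ = a * (b * Real.cos θ) ^ (3 : ℕ) := by
          rw [← Real.rpow_mul hbc, ← Real.rpow_natCast (b * Real.cos θ) 3]; norm_num
      _ = b * (Real.cos θ * (1 / (1 + u ^ 2) * (a * b ^ 2))) := by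
          rw [← hcos2]; ring
  refine ⟨fun t => (key t).differentiableAt, fun t => ?_, key⟩
  rw [hf t, abs_mul, abs_of_pos hb]
  calc b * |Real.sin (Real.arctan (a * b ^ 2 * t + c))| < b * 1 := by
        exact (mul_lt_mul_iff_right₀ hb).mpr (sin_arctan_abs_lt_one _)
    _ = b := mul_one b
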